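/- For a finite groupoid 𝒢 and a 𝒢-set X, the Burnside ring B(𝒢 ⋊ X) of the action groupoid is isomorphic to the crossed Burnside ring B_Had(𝒢, X) := K₀(Set^𝒢/X, ⊔, ×_X) of X with the Hadamard product. -/

import Mathlib

open CategoryTheory

universe v u w


section K0
variable (C : Type*) [Category C]

/-- The isomorphism class of an object. -/
def isoCl (X : C) : _root_.Quotient (isIsomorphicSetoid C) := Quotient.mk _ X

/-- The ideal of relations defining the Grothendieck ring `K₀(C, ⊔, ⊗)`:
`[X ⊔ Y] = [X] + [Y]`, `[X ⊗ Y] = [X]·[Y]` and `[unit] = 1`. -/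
noncomputable def k0Ideal (t c : C → C → C) (e : C) :
    Ideal (MvPolynomial (_root_.Quotient (isIsomorphicSetoid C)) ℤ) :=
  Ideal.span
    ((Set.range fun p : C × C =>
        MvPolynomial.X (isoCl C (c p.1 p.2)) - MvPolynomial.X (isoCl C p.1) -
          MvPolynomial.X (isoCl C p.2)) ∪
     (Set.range fun p : C × C =>
        MvPolynomial.X (isoCl C (t p.1 p.2)) -
          MvPolynomial.X (isoCl C p.1) * MvPolynomial.X (isoCl C p.2)) ∪
     {MvPolynomial.X (isoCl C e) - 1})

/-- The Grothendieck ring `K₀(C, ⊔, ⊗)` of a category equipped with a coproduct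
operation `c`, a tensor product operation `t` and a unit object `e`: the commutative
ring generated by the isomorphism classes of objects of `C` subject to the relations
`[X ⊔ Y] = [X] + [Y]`, `[X ⊗ Y] = [X]·[Y]` and `[e] = 1`.  Its underlying additive
group is the group completion of the monoid of isomorphism classes under `⊔`. -/
def K0 (t c : C → C → C) (e : C) : Type _ :=
  MvPolynomial (_root_.Quotient (isIsomorphicSetoid C)) ℤ ⧸ k0Ideal C t c e

noncomputable instance (t c : C → C → C) (e : C) : CommRing (K0 C t c e) :=
  inferInstanceAs
    (CommRing (MvPolynomial (_root_.Quotient (isIsomorphicSetoid C)) ℤ ⧸ k0Ideal C t c e))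

/-- The class of an object of `C` in the Grothendieck ring `K₀(C, ⊔, ⊗)`. -/
noncomputable def K0.of (t c : C → C → C) (e : C) (X : C) : K0 C t c e :=
  Ideal.Quotient.mk (k0Ideal C t c e) (MvPolynomial.X (isoCl C X))

end K0

section Sets
variable {J : Type w} [Category.{v} J]

/-- Pointwise product of functors to finite sets. -/
@[simps] def prodF (X Y : J ⥤ FintypeCat.{v}) : J ⥤ FintypeCat.{v} where
  obj g := FintypeCat.of (X.obj g × Y.obj g)
  map h := FintypeCat.homMk fun p => (X.map h p.1, Y.map h p.2)
  map_id g := by apply FintypeCat.hom_ext; intro p; change (X.map (𝟙 g) p.1, Y.map (𝟙 g) p.2) = p; simp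
  map_comp f h := by apply FintypeCat.hom_ext; intro p; change (X.map (f ≫ h) p.1, Y.map (f ≫ h) p.2) = (X.map h (X.map f p.1), Y.map h (Y.map f p.2)); simp

/-- Pointwise coproduct (disjoint union) of functors to finite sets. -/
@[simps] def coprodF (X Y : J ⥤ FintypeCat.{v}) : J ⥤ FintypeCat.{v} where
  obj g := FintypeCat.of (X.obj g ⊕ Y.obj g)
  map h := FintypeCat.homMk fun p => Sum.map (X.map h) (Y.map h) p
  map_id g := by apply FintypeCat.hom_ext; intro p; change Sum.map (X.map (𝟙 g)) (Y.map (𝟙 g)) p = p; cases p <;> simp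
  map_comp f h := by apply FintypeCat.hom_ext; intro p; change Sum.map (X.map (f ≫ h)) (Y.map (f ≫ h)) p = Sum.map (X.map h) (Y.map h) (Sum.map (X.map f) (Y.map f) p); cases p <;> simp

/-- The terminal functor to finite sets. -/
def termF : J ⥤ FintypeCat.{v} := (Functor.const J).obj (FintypeCat.of PUnit)

variable (X : J ⥤ FintypeCat.{v})

/-- Coproducts in the slice category `Set^𝒢 / X`. -/
def coprodOver (u v : Over X) : Over X :=
  Over.mk (Y := coprodF u.left v.left)
    { app := fun g => FintypeCat.homMk fun p => Sum.elim (u.hom.app g) (v.hom.app g) p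
      naturality := by intro x y f; apply FintypeCat.hom_ext; intro p; cases p with
        | inl a => exact ConcreteCategory.congr_hom (u.hom.naturality f) a
        | inr b => exact ConcreteCategory.congr_hom (v.hom.naturality f) b }

/-- The pointwise fiber product of two objects of `Set^𝒢 / X` over `X`. -/
noncomputable def fiberF (u v : Over X) : J ⥤ FintypeCat.{v} where
  obj g :=
    letI : DecidablePred fun p : u.left.obj g × v.left.obj g =>
        u.hom.app g p.1 = v.hom.app g p.2 := fun _ => Classical.propDecidable _
    FintypeCat.of {p : u.left.obj g × v.left.obj g // u.hom.app g p.1 = v.hom.app g p.2}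
  map {g g'} h := FintypeCat.homMk fun p =>
    ⟨(u.left.map h p.1.1, v.left.map h p.1.2), by
      have hu := ConcreteCategory.congr_hom (u.hom.naturality h) p.1.1
      have hv := ConcreteCategory.congr_hom (v.hom.naturality h) p.1.2
      dsimp at hu hv ⊢
      rw [hu, hv, p.2]⟩
  map_id g := by
    apply FintypeCat.hom_ext; intro p
    apply Subtype.ext
    show (u.left.map (𝟙 g) p.1.1, v.left.map (𝟙 g) p.1.2) = p.1
    simp
  map_comp f h := by
    apply FintypeCat.hom_ext; intro p
    apply Subtype.ext
    show (u.left.map (f ≫ h) p.1.1, v.left.map (f ≫ h) p.1.2) = _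
    simp
    rfl


/-- The Hadamard product on `Set^𝒢 / X`: the fiber product over `X`. -/
noncomputable def hadamardOver (u v : Over X) : Over X :=
  Over.mk (Y := fiberF X u v)
    { app := fun g => FintypeCat.homMk fun p => u.hom.app g p.1.1
      naturality := by
        intro x y f
        apply FintypeCat.hom_ext; intro p
        exact ConcreteCategory.congr_hom (u.hom.naturality f) p.1.1 }

end Sets


section K0Equiv
open MvPolynomial

variable {C : Type*} [Category C] {D : Type*} [Category D]

lemma isoCl_eq_of_iso {a b : C} (i : a ≅ b) : isoCl C a = isoCl C b :=
  Quotient.sound ⟨i⟩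

theorem k0_ringEquiv (t c : C → C → C) (e : C) (t' c' : D → D → D) (e' : D)
    (F : C → D) (G : D → C)
    (hF : ∀ a b : C, (isIsomorphicSetoid C).r a b → (isIsomorphicSetoid D).r (F a) (F b))
    (hG : ∀ x y : D, (isIsomorphicSetoid D).r x y → (isIsomorphicSetoid C).r (G x) (G y))
    (h1 : ∀ a : C, isoCl C (G (F a)) = isoCl C a)
    (h2 : ∀ x : D, isoCl D (F (G x)) = isoCl D x)
    (h3 : ∀ a b : C, isoCl D (F (c a b)) = isoCl D (c' (F a) (F b)))
    (h4 : ∀ a b : C, isoCl D (F (t a b)) = isoCl D (t' (F a) (F b)))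
    (h5 : isoCl D (F e) = isoCl D e')
    (h6 : ∀ x y : D, isoCl C (G (c' x y)) = isoCl C (c (G x) (G y)))
    (h7 : ∀ x y : D, isoCl C (G (t' x y)) = isoCl C (t (G x) (G y))) :
    Nonempty (K0 C t c e ≃+* K0 D t' c' e') := by
  classical
  let σ : Quotient (isIsomorphicSetoid C) ≃ Quotient (isIsomorphicSetoid D) :=
    { toFun := Quotient.map F hF
      invFun := Quotient.map G hG
      left_inv := by
        intro q
        induction q using Quotient.ind with
        | _ a => exact h1 a
      right_inv := by
        intro q
        induction q using Quotient.ind with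
        | _ x => exact h2 x }
  let f : MvPolynomial (Quotient (isIsomorphicSetoid C)) ℤ ≃+*
      MvPolynomial (Quotient (isIsomorphicSetoid D)) ℤ :=
    (renameEquiv ℤ σ).toRingEquiv
  have hσ : ∀ a : C, σ (isoCl C a) = isoCl D (F a) := fun a => rfl
  have hfX : ∀ a : C, (f : MvPolynomial (Quotient (isIsomorphicSetoid C)) ℤ →+*
      MvPolynomial (Quotient (isIsomorphicSetoid D)) ℤ) (X (isoCl C a)) = X (isoCl D (F a)) := by
    intro a
    have h0 : (f : MvPolynomial (Quotient (isIsomorphicSetoid C)) ℤ →+*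
        MvPolynomial (Quotient (isIsomorphicSetoid D)) ℤ) (X (isoCl C a))
        = rename σ (X (isoCl C a)) := rfl
    rw [h0, rename_X, hσ]
  have hFc : ∀ x y : D, isoCl D (F (c (G x) (G y))) = isoCl D (c' x y) := by
    intro x y
    have h := congrArg σ (h6 x y)
    rw [hσ, hσ, h2] at h
    exact h.symm
  have hFt : ∀ x y : D, isoCl D (F (t (G x) (G y))) = isoCl D (t' x y) := by
    intro x y
    have h := congrArg σ (h7 x y)
    rw [hσ, hσ, h2] at h
    exact h.symm
  have key : k0Ideal D t' c' e' = (k0Ideal C t c e).map (f : _ →+* _) := by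
    rw [k0Ideal, k0Ideal, Ideal.map_span]
    apply le_antisymm
    · apply Ideal.span_le.2
      rintro p ((⟨⟨x, y⟩, rfl⟩ | ⟨⟨x, y⟩, rfl⟩) | rfl)
      · apply Ideal.subset_span
        refine ⟨X (isoCl C (c (G x) (G y))) - X (isoCl C (G x)) - X (isoCl C (G y)),
          Or.inl (Or.inl ⟨(G x, G y), rfl⟩), ?_⟩
        rw [map_sub, map_sub, hfX, hfX, hfX, hFc, h2, h2]
      · apply Ideal.subset_span
        refine ⟨X (isoCl C (t (G x) (G y))) - X (isoCl C (G x)) * X (isoCl C (G y)),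
          Or.inl (Or.inr ⟨(G x, G y), rfl⟩), ?_⟩
        rw [map_sub, map_mul, hfX, hfX, hfX, hFt, h2, h2]
      · apply Ideal.subset_span
        refine ⟨X (isoCl C e) - 1, Or.inr rfl, ?_⟩
        rw [map_sub, map_one, hfX, h5]
    · apply Ideal.span_le.2
      rintro p ⟨q, ((⟨⟨a, b⟩, rfl⟩ | ⟨⟨a, b⟩, rfl⟩) | rfl), rfl⟩
      · apply Ideal.subset_span
        dsimp only
        rw [map_sub, map_sub, hfX, hfX, hfX, h3]
        exact Or.inl (Or.inl ⟨(F a, F b), rfl⟩)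
      · apply Ideal.subset_span
        dsimp only
        rw [map_sub, map_mul, hfX, hfX, hfX, h4]
        exact Or.inl (Or.inr ⟨(F a, F b), rfl⟩)
      · apply Ideal.subset_span
        rw [map_sub, map_one, hfX, h5]
        exact Or.inr rfl
  exact ⟨Ideal.quotientEquiv _ _ f key⟩

end K0Equiv
section Construction

variable {G : Type u} [Category.{v} G] (X : G ⥤ FintypeCat.{v})

/-- Objects of the category of elements. -/
abbrev emk (g : G) (x : (X ⋙ FintypeCat.incl).obj g) : (X ⋙ FintypeCat.incl).Elements :=
  ⟨g, x⟩

/-- Morphisms of the category of elements. -/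
abbrev ehom {g g' : G} (h : g ⟶ g') {x : (X ⋙ FintypeCat.incl).obj g}
    {x' : (X ⋙ FintypeCat.incl).obj g'} (e : (X ⋙ FintypeCat.incl).map h x = x') :
    emk X g x ⟶ emk X g' x' :=
  ⟨h, e⟩

lemma elemHomExt {F : G ⥤ Type v} {p q : F.Elements} {f f' : p ⟶ q} (h : f.val = f'.val) :
    f = f' := Subtype.ext h

lemma mapHeq (Y : (X ⋙ FintypeCat.incl).Elements ⥤ FintypeCat.{v}) {g g' : G} (h : g ⟶ g')
    {x : (X ⋙ FintypeCat.incl).obj g} {x' x'' : (X ⋙ FintypeCat.incl).obj g'}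
    (e' : (X ⋙ FintypeCat.incl).map h x = x') (e'' : (X ⋙ FintypeCat.incl).map h x = x'')
    (y : Y.obj (emk X g x)) :
    HEq (Y.map (ehom X h e') y) (Y.map (ehom X h e'') y) := by
  subst e' e''; rfl

/-- The left leg of the image in `Over X` of a functor on the category of elements. -/
noncomputable def toOverLeft (Y : (X ⋙ FintypeCat.incl).Elements ⥤ FintypeCat.{v}) :
    G ⥤ FintypeCat.{v} where
  obj g := FintypeCat.of (Σ x : X.obj g, Y.obj (emk X g x))
  map {g g'} h := FintypeCat.homMk fun (p : Σ x : X.obj g, Y.obj (emk X g x)) =>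
    (⟨X.map h p.1, Y.map (ehom X h rfl) p.2⟩ : Σ x : X.obj g', Y.obj (emk X g' x))
  map_id g := by
    apply FintypeCat.hom_ext; intro p
    obtain ⟨x, y⟩ := p
    show (⟨X.map (𝟙 g) x, Y.map (ehom X (𝟙 g) rfl) y⟩ : Σ x : X.obj g, Y.obj (emk X g x))
      = ⟨x, y⟩
    have e : (X ⋙ FintypeCat.incl).map (𝟙 g) x = x := by simp
    refine Sigma.ext e ?_
    refine HEq.trans (mapHeq X Y (𝟙 g) rfl e y) ?_
    have h0 : ehom X (𝟙 g) e = 𝟙 (emk X g x) := elemHomExt rfl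
    rw [h0, Y.map_id]
    exact heq_of_eq rfl
  map_comp {g g' g''} f h := by
    apply FintypeCat.hom_ext; intro p
    obtain ⟨x, y⟩ := p
    show (⟨X.map (f ≫ h) x, Y.map (ehom X (f ≫ h) rfl) y⟩ : Σ x : X.obj g'', Y.obj (emk X g'' x))
      = ⟨X.map h (X.map f x), Y.map (ehom X h rfl) (Y.map (ehom X f rfl) y)⟩
    have e : (X ⋙ FintypeCat.incl).map (f ≫ h) x
        = (X ⋙ FintypeCat.incl).map h ((X ⋙ FintypeCat.incl).map f x) := by simp
    refine Sigma.ext e ?_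
    refine HEq.trans (mapHeq X Y (f ≫ h) rfl e y) ?_
    have h0 : ehom X (f ≫ h) e = ehom X f rfl ≫ ehom X h rfl := elemHomExt rfl
    rw [h0, Y.map_comp]
    exact heq_of_eq rfl

/-- The image in `Over X` of a functor on the category of elements. -/
noncomputable def toOver (Y : (X ⋙ FintypeCat.incl).Elements ⥤ FintypeCat.{v}) : Over X :=
  Over.mk (Y := toOverLeft X Y)
    { app := fun g => FintypeCat.homMk fun (p : Σ x : X.obj g, Y.obj (emk X g x)) => (p.1 : X.obj g)
      naturality := by intro g g' h; apply FintypeCat.hom_ext; intro p; rfl }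

/-- The fiber functor on the category of elements attached to an object of `Over X`. -/
noncomputable def toFun (u : Over X) : (X ⋙ FintypeCat.incl).Elements ⥤ FintypeCat.{v} where
  obj p :=
    letI : DecidablePred fun a : u.left.obj p.1 => u.hom.app p.1 a = p.2 :=
      fun _ => Classical.propDecidable _
    FintypeCat.of {a : u.left.obj p.1 // u.hom.app p.1 a = p.2}
  map {p q} m := FintypeCat.homMk fun (a : {a : u.left.obj p.1 // u.hom.app p.1 a = p.2}) =>
    (⟨u.left.map m.val a.1, by
      have hnat := ConcreteCategory.congr_hom (u.hom.naturality m.val) a.1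
      dsimp at hnat ⊢
      rw [hnat, a.2]
      exact m.2⟩ : {a : u.left.obj q.1 // u.hom.app q.1 a = q.2})
  map_id p := by
    apply FintypeCat.hom_ext; intro a
    apply Subtype.ext
    show u.left.map (𝟙 p.1) a.1 = a.1
    simp
  map_comp {p q r} m m' := by
    apply FintypeCat.hom_ext; intro a
    apply Subtype.ext
    show u.left.map (m.val ≫ m'.val) a.1 = u.left.map m'.val (u.left.map m.val a.1)
    simp

end Construction
section Isos

variable {G : Type u} [Category.{v} G] (X : G ⥤ FintypeCat.{v})

/-- `toFun (toOver Y) ≅ Y`. -/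
noncomputable def unitIso (Y : (X ⋙ FintypeCat.incl).Elements ⥤ FintypeCat.{v}) :
    toFun X (toOver X Y) ≅ Y := by
  refine NatIso.ofComponents (fun p => ?_) ?_
  · refine
      { hom := FintypeCat.homMk fun (q : (toFun X (toOver X Y)).obj p) =>
          Y.map (ehom X (𝟙 p.1) (x := q.1.1) (x' := p.2) (by have hq0 : q.1.1 = p.2 := q.2; simpa using hq0)) q.1.2
        inv := FintypeCat.homMk fun y => (⟨⟨p.2, y⟩, rfl⟩ : (toFun X (toOver X Y)).obj p)
        hom_inv_id := ?_
        inv_hom_id := ?_ }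
    · apply FintypeCat.hom_ext; intro q
      apply Subtype.ext
      show (⟨p.2, Y.map (ehom X (𝟙 p.1) (x := q.1.1) (x' := p.2) (by have hq0 : q.1.1 = p.2 := q.2; simpa using hq0)) q.1.2⟩ :
          Σ x : X.obj p.1, Y.obj (emk X p.1 x)) = q.1
      have e0 : (X ⋙ FintypeCat.incl).map (𝟙 p.1) q.1.1 = q.1.1 := by simp
      refine Sigma.ext ((q.2 : q.1.1 = p.2)).symm ?_
      refine HEq.trans (mapHeq X Y (𝟙 p.1) _ e0 q.1.2) ?_
      have h0 : ehom X (𝟙 p.1) e0 = 𝟙 (emk X p.1 q.1.1) := elemHomExt rfl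
      rw [h0, Y.map_id]
      exact heq_of_eq rfl
    · apply FintypeCat.hom_ext; intro y
      have h0 : ehom X (𝟙 p.1) (x := p.2) (x' := p.2) (by simp) = 𝟙 (emk X p.1 p.2) :=
        elemHomExt rfl
      show Y.map (ehom X (𝟙 p.1) _) y = y
      rw [h0, Y.map_id]
      rfl
  · intro p p' m
    apply FintypeCat.hom_ext; intro q
    have hq : (q.1.1 : (X ⋙ FintypeCat.incl).obj p.1) = p.2 := q.2
    show (Y.map (ehom X m.val rfl) ≫
        Y.map (ehom X (𝟙 p'.1) (x' := p'.2)
          (by rw [hq]; simpa using m.2))) q.1.2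
      = (Y.map (ehom X (𝟙 p.1) (x' := p.2) (by have hq0 : q.1.1 = p.2 := q.2; simpa using hq0)) ≫ Y.map m) q.1.2
    rw [← Y.map_comp, ← Y.map_comp]
    refine ConcreteCategory.congr_hom (congrArg Y.map (elemHomExt ?_)) q.1.2
    show m.val ≫ 𝟙 p'.1 = 𝟙 p.1 ≫ m.val
    simp

lemma counitAux (u : Over X) (g : G) (x : X.obj g) (a : u.left.obj g)
    (ha : u.hom.app g a = x) :
    (⟨u.hom.app g a, ⟨a, rfl⟩⟩ : Σ x : X.obj g, (toFun X u).obj (emk X g x)) = ⟨x, ⟨a, ha⟩⟩ := by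
  subst ha
  rfl

/-- `toOver (toFun u) ≅ u`. -/
noncomputable def counitIso (u : Over X) : toOver X (toFun X u) ≅ u := by
  refine Over.isoMk (NatIso.ofComponents (fun g => ?_) ?_) ?_
  · refine
      { hom := FintypeCat.homMk fun p : Σ x : X.obj g, (toFun X u).obj (emk X g x) =>
          (p.2.1 : u.left.obj g)
        inv := FintypeCat.homMk fun a =>
          (⟨u.hom.app g a, ⟨a, rfl⟩⟩ : Σ x : X.obj g, (toFun X u).obj (emk X g x))
        hom_inv_id := ?_
        inv_hom_id := ?_ }
    · apply FintypeCat.hom_ext; intro p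
      obtain ⟨x, a, ha⟩ := p
      exact counitAux X u g x a ha
    · apply FintypeCat.hom_ext; intro a
      rfl
  · intro g g' h
    apply FintypeCat.hom_ext; intro p
    rfl
  · apply NatTrans.ext
    funext g
    apply FintypeCat.hom_ext; intro p
    exact p.2.2

end Isos
section MapIso

variable {G : Type u} [Category.{v} G] (X : G ⥤ FintypeCat.{v})

/-- `toOver` respects isomorphisms. -/
noncomputable def toOverMapIso {Y Z : (X ⋙ FintypeCat.incl).Elements ⥤ FintypeCat.{v}}
    (η : Y ≅ Z) : toOver X Y ≅ toOver X Z := by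
  refine Over.isoMk (NatIso.ofComponents (fun g => ?_) ?_) ?_
  · refine
      { hom := FintypeCat.homMk fun p : Σ x : X.obj g, Y.obj (emk X g x) =>
          (⟨p.1, η.hom.app (emk X g p.1) p.2⟩ : Σ x : X.obj g, Z.obj (emk X g x))
        inv := FintypeCat.homMk fun p : Σ x : X.obj g, Z.obj (emk X g x) =>
          (⟨p.1, η.inv.app (emk X g p.1) p.2⟩ : Σ x : X.obj g, Y.obj (emk X g x))
        hom_inv_id := ?_
        inv_hom_id := ?_ }
    · apply FintypeCat.hom_ext; intro p
      exact congrArg (Sigma.mk p.1) (ConcreteCategory.congr_hom (η.hom_inv_id_app (emk X g p.1)) p.2)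
    · apply FintypeCat.hom_ext; intro p
      exact congrArg (Sigma.mk p.1) (ConcreteCategory.congr_hom (η.inv_hom_id_app (emk X g p.1)) p.2)
  · intro g g' h
    apply FintypeCat.hom_ext; intro p
    exact congrArg (Sigma.mk (X.map h p.1))
      (ConcreteCategory.congr_hom (η.hom.naturality (ehom X h rfl)) p.2)
  · apply NatTrans.ext
    funext g
    apply FintypeCat.hom_ext; intro p
    rfl

/-- `toFun` respects isomorphisms. -/
noncomputable def toFunMapIso {u v : Over X} (η : u ≅ v) : toFun X u ≅ toFun X v := by
  have hw : ∀ (g : G) (a : u.left.obj g), v.hom.app g (η.hom.left.app g a) = u.hom.app g a :=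
    fun g a => ConcreteCategory.congr_hom (congrArg (fun t => NatTrans.app t g) (Over.w η.hom)) a
  have hw' : ∀ (g : G) (b : v.left.obj g), u.hom.app g (η.inv.left.app g b) = v.hom.app g b :=
    fun g b => ConcreteCategory.congr_hom (congrArg (fun t => NatTrans.app t g) (Over.w η.inv)) b
  have hii : ∀ (g : G) (a : u.left.obj g), η.inv.left.app g (η.hom.left.app g a) = a := by
    intro g a
    have := congrArg CommaMorphism.left η.hom_inv_id
    exact ConcreteCategory.congr_hom (congrArg (fun t => NatTrans.app t g) this) a
  have hii' : ∀ (g : G) (b : v.left.obj g), η.hom.left.app g (η.inv.left.app g b) = b := by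
    intro g b
    have := congrArg CommaMorphism.left η.inv_hom_id
    exact ConcreteCategory.congr_hom (congrArg (fun t => NatTrans.app t g) this) b
  refine NatIso.ofComponents (fun p => ?_) ?_
  · refine
      { hom := FintypeCat.homMk fun (a : (toFun X u).obj p) =>
          (⟨η.hom.left.app p.1 a.1, by rw [hw]; exact a.2⟩ : (toFun X v).obj p)
        inv := FintypeCat.homMk fun (b : (toFun X v).obj p) =>
          (⟨η.inv.left.app p.1 b.1, by rw [hw']; exact b.2⟩ : (toFun X u).obj p)
        hom_inv_id := ?_
        inv_hom_id := ?_ }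
    · apply FintypeCat.hom_ext; intro a
      apply Subtype.ext
      exact hii p.1 a.1
    · apply FintypeCat.hom_ext; intro b
      apply Subtype.ext
      exact hii' p.1 b.1
  · intro p q m
    apply FintypeCat.hom_ext; intro a
    apply Subtype.ext
    exact ConcreteCategory.congr_hom (η.hom.left.naturality m.val) a.1

end MapIso
section Compat

variable {G : Type u} [Category.{v} G] (X : G ⥤ FintypeCat.{v})

/-- `toOver` sends coproducts to coproducts. -/
noncomputable def toOverCoprod (Y Z : (X ⋙ FintypeCat.incl).Elements ⥤ FintypeCat.{v}) :
    toOver X (coprodF Y Z) ≅ coprodOver X (toOver X Y) (toOver X Z) := by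
  refine Over.isoMk (NatIso.ofComponents (fun g => ?_) ?_) ?_
  · refine
      { hom := FintypeCat.homMk fun p : Σ x : X.obj g, (Y.obj (emk X g x) ⊕ Z.obj (emk X g x)) =>
          (match p with
            | ⟨x, Sum.inl y⟩ => Sum.inl ⟨x, y⟩
            | ⟨x, Sum.inr z⟩ => Sum.inr ⟨x, z⟩ :
            (Σ x : X.obj g, Y.obj (emk X g x)) ⊕ (Σ x : X.obj g, Z.obj (emk X g x)))
        inv := FintypeCat.homMk fun (s : (Σ x : X.obj g, Y.obj (emk X g x)) ⊕
            (Σ x : X.obj g, Z.obj (emk X g x))) =>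
          (Sum.elim (fun q => ⟨q.1, Sum.inl q.2⟩) (fun q => ⟨q.1, Sum.inr q.2⟩) s :
            Σ x : X.obj g, (Y.obj (emk X g x) ⊕ Z.obj (emk X g x)))
        hom_inv_id := ?_
        inv_hom_id := ?_ }
    · apply FintypeCat.hom_ext; intro p
      rcases p with ⟨x, y | z⟩ <;> rfl
    · apply FintypeCat.hom_ext; intro s
      rcases s with q | q <;> rfl
  · intro g g' h
    apply FintypeCat.hom_ext; intro p
    rcases p with ⟨x, y | z⟩ <;> rfl
  · apply NatTrans.ext
    funext g
    apply FintypeCat.hom_ext; intro p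
    rcases p with ⟨x, y | z⟩ <;> rfl

/-- `toOver` sends products to Hadamard products. -/
noncomputable def toOverProd (Y Z : (X ⋙ FintypeCat.incl).Elements ⥤ FintypeCat.{v}) :
    toOver X (prodF Y Z) ≅ hadamardOver X (toOver X Y) (toOver X Z) := by
  refine Over.isoMk (NatIso.ofComponents (fun g => ?_) ?_) ?_
  · refine FintypeCat.equivEquivIso (Equiv.ofBijective
      (fun p : (toOver X (prodF Y Z)).left.obj g =>
        (⟨((⟨p.1, p.2.1⟩ : Σ x : X.obj g, Y.obj (emk X g x)),
          (⟨p.1, p.2.2⟩ : Σ x : X.obj g, Z.obj (emk X g x))), rfl⟩ :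
          (fiberF X (toOver X Y) (toOver X Z)).obj g))
      ⟨?_, ?_⟩)
    · rintro ⟨x, y, z⟩ ⟨x', y', z'⟩ h
      have h' := congrArg Subtype.val h
      have hl := congrArg Prod.fst h'
      have hr := congrArg Prod.snd h'
      dsimp at hl hr
      obtain ⟨rfl, hy⟩ := Sigma.mk.inj_iff.mp hl
      obtain ⟨-, hz⟩ := Sigma.mk.inj_iff.mp hr
      rw [eq_of_heq hy, eq_of_heq hz]
    · rintro ⟨⟨⟨x, y⟩, ⟨x', z⟩⟩, hc⟩
      have hx : x = x' := hc
      subst hx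
      exact ⟨⟨x, y, z⟩, Subtype.ext rfl⟩
  · intro g g' h
    apply FintypeCat.hom_ext; intro p
    apply Subtype.ext
    rfl
  · apply NatTrans.ext
    funext g
    apply FintypeCat.hom_ext; intro p
    rfl

/-- `toOver` sends the terminal functor to the unit of the Hadamard product. -/
noncomputable def toOverTerm : toOver X (termF (J := (X ⋙ FintypeCat.incl).Elements))
    ≅ Over.mk (𝟙 X) := by
  refine Over.isoMk (NatIso.ofComponents (fun g => ?_) ?_) ?_
  · refine
      { hom := FintypeCat.homMk fun p : Σ x : X.obj g,
          (termF (J := (X ⋙ FintypeCat.incl).Elements)).obj (emk X g x) => (p.1 : X.obj g)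
        inv := FintypeCat.homMk fun (x : X.obj g) => (⟨x, PUnit.unit⟩ : Σ x : X.obj g,
          (termF (J := (X ⋙ FintypeCat.incl).Elements)).obj (emk X g x))
        hom_inv_id := ?_
        inv_hom_id := ?_ }
    · apply FintypeCat.hom_ext; intro p
      rcases p with ⟨x, ⟨⟩⟩
      rfl
    · apply FintypeCat.hom_ext; intro x
      rfl
  · intro g g' h
    apply FintypeCat.hom_ext; intro p
    rfl
  · apply NatTrans.ext
    funext g
    apply FintypeCat.hom_ext; intro p
    rfl

/-- `toFun` sends coproducts to coproducts. -/
noncomputable def toFunCoprod (u v : Over X) :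
    toFun X (coprodOver X u v) ≅ coprodF (toFun X u) (toFun X v) := by
  refine NatIso.ofComponents (fun p => ?_) ?_
  · refine
      { hom := FintypeCat.homMk fun (a : (toFun X (coprodOver X u v)).obj p) => (match a with
          | ⟨Sum.inl y, h⟩ => Sum.inl ⟨y, h⟩
          | ⟨Sum.inr z, h⟩ => Sum.inr ⟨z, h⟩ :
          (toFun X u).obj p ⊕ (toFun X v).obj p)
        inv := FintypeCat.homMk fun (s : (toFun X u).obj p ⊕ (toFun X v).obj p) =>
          (Sum.elim (fun (a : (toFun X u).obj p) => ⟨Sum.inl a.1, a.2⟩)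
            (fun (b : (toFun X v).obj p) => ⟨Sum.inr b.1, b.2⟩) s :
          (toFun X (coprodOver X u v)).obj p)
        hom_inv_id := ?_
        inv_hom_id := ?_ }
    · apply FintypeCat.hom_ext; intro a
      rcases a with ⟨y | z, h⟩ <;> rfl
    · apply FintypeCat.hom_ext; intro s
      rcases s with a | b <;> rfl
  · intro p q m
    apply FintypeCat.hom_ext; intro a
    rcases a with ⟨y | z, h⟩ <;> rfl

/-- `toFun` sends Hadamard products to products. -/
noncomputable def toFunProd (u v : Over X) :
    toFun X (hadamardOver X u v) ≅ prodF (toFun X u) (toFun X v) := by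
  refine NatIso.ofComponents (fun p => ?_) ?_
  · refine
      { hom := FintypeCat.homMk fun (w : (toFun X (hadamardOver X u v)).obj p) =>
          ((⟨w.1.1.1, w.2⟩, ⟨w.1.1.2, by rw [← w.1.2]; exact w.2⟩) :
          (toFun X u).obj p × (toFun X v).obj p)
        inv := FintypeCat.homMk fun (s : (toFun X u).obj p × (toFun X v).obj p) =>
          (⟨⟨(s.1.1, s.2.1), s.1.2.trans s.2.2.symm⟩, s.1.2⟩ :
          (toFun X (hadamardOver X u v)).obj p)
        hom_inv_id := ?_
        inv_hom_id := ?_ }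
    · apply FintypeCat.hom_ext; intro w
      apply Subtype.ext
      apply Subtype.ext
      rfl
    · apply FintypeCat.hom_ext; intro s
      rfl
  · intro p q m
    apply FintypeCat.hom_ext; intro w
    rfl

end Compat
/-- For a finite groupoid `𝒢` and a `𝒢`-set `X`, the Burnside ring
`B(𝒢 ⋊ X) = K₀(Set^{𝒢 ⋊ X}, ⊔, ×)` of the action groupoid (the category of elements
of `X`) is isomorphic to the crossed Burnside ring
`B_Had(𝒢, X) = K₀(Set^𝒢 / X, ⊔, ×_X)` of `X` with the Hadamard product (the fiber
product over `X`), with unit the identity `X → X`. -/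
theorem burnside_actionGroupoid_iso_hadamard_crossedBurnside
    (G : Type u) [Groupoid.{v} G] [Fintype G] [∀ x y : G, Fintype (x ⟶ y)]
    (X : G ⥤ FintypeCat.{v}) :
    Nonempty
      (K0 ((X ⋙ FintypeCat.incl).Elements ⥤ FintypeCat.{v}) prodF coprodF termF ≃+*
        K0 (Over X) (hadamardOver X) (coprodOver X) (Over.mk (𝟙 X))) := by
  refine k0_ringEquiv prodF coprodF termF (hadamardOver X) (coprodOver X) (Over.mk (𝟙 X))
    (toOver X) (toFun X) ?_ ?_ ?_ ?_ ?_ ?_ ?_ ?_ ?_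
  · rintro Y Z ⟨i⟩; exact ⟨toOverMapIso X i⟩
  · rintro u v ⟨i⟩; exact ⟨toFunMapIso X i⟩
  · intro Y; exact isoCl_eq_of_iso (unitIso X Y)
  · intro u; exact isoCl_eq_of_iso (counitIso X u)
  · intro Y Z; exact isoCl_eq_of_iso (toOverCoprod X Y Z)
  · intro Y Z; exact isoCl_eq_of_iso (toOverProd X Y Z)
  · exact isoCl_eq_of_iso (toOverTerm X)
  · intro u v; exact isoCl_eq_of_iso (toFunCoprod X u v)
  · intro u v; exact isoCl_eq_of_iso (toFunProd X u v)
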